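/- For n ≥ 4, the run-length heap representations of the legal GA1 options of the constant bit string of length n, after deleting runs of length 1, are exactly the multisets {j, n−j} for 2 ≤ j ≤ n−j, the multisets {k, n−1−k} for 2 ≤ k ≤ n−1−k, and the singletons {n−1} and {n−2}. -/

import Mathlib

/-- The minimum excludant of a set of naturals. -/
noncomputable def mex (S : Set ℕ) : ℕ := sInf {n : ℕ | n ∉ S}

/-- The entropy of a bit string: the number of adjacent pairs of unequal bits. -/
def entropy (b : List Bool) : ℕ := (b.zip b.tail).countP fun p => p.1 != p.2

/-- Crossover at position `k` (1-indexed): flip bits `b₁,…,b_k`. -/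
def ga1Crossover (k : ℕ) (b : List Bool) : List Bool := (b.take k).map (! ·) ++ b.drop k

/-- Mutation at (0-indexed) position `i`: flip bit `i`. -/
def ga1Mutate (i : ℕ) (b : List Bool) : List Bool := b.set i (!(b.getD i false))

/-- The legal moves of GA1: a crossover or a mutation that strictly increases entropy. -/
def ga1Move (b b' : List Bool) : Prop :=
  ((∃ k, 1 ≤ k ∧ k ≤ b.length - 1 ∧ b' = ga1Crossover k b) ∨
    (∃ i, i < b.length ∧ b' = ga1Mutate i b)) ∧
  entropy b < entropy b'

/-- Helper for computing run lengths: `cur` is the current bit, `cnt` the length of the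
current run so far. -/
def runLengthsAux (cur : Bool) (cnt : ℕ) : List Bool → List ℕ
  | [] => [cnt]
  | a :: rest => if a = cur then runLengthsAux cur (cnt + 1) rest
                 else cnt :: runLengthsAux a 1 rest

/-- The sequence of run lengths of a bit string (a run is a maximal constant sub-string). -/
def runLengths : List Bool → List ℕ
  | [] => []
  | a :: rest => runLengthsAux a 1 rest

/-- The multiset of run lengths of a bit string with all entries equal to 1 deleted. -/
def heapOf (b : List Bool) : Multiset ℕ := (↑(runLengths b) : Multiset ℕ).filter (· ≠ 1)


section GA1Helpers

lemma aux_rep (x : Bool) (l : List Bool) : ∀ (m cnt : ℕ),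
    runLengthsAux x cnt (List.replicate m x ++ l) = runLengthsAux x (cnt + m) l := by
  intro m
  induction m with
  | zero => simp
  | succ m ih =>
    intro cnt
    rw [List.replicate_succ, List.cons_append]
    show runLengthsAux x cnt (x :: _) = _
    simp only [runLengthsAux, if_pos rfl]
    rw [ih, Nat.add_assoc, Nat.add_comm 1 m]
    simp

lemma aux_ne {x y : Bool} (h : y ≠ x) (cnt : ℕ) (l : List Bool) :
    runLengthsAux x cnt (y :: l) = cnt :: runLengthsAux y 1 l := by
  simp [runLengthsAux, h]

lemma rl_two (a b : ℕ) (ha : 1 ≤ a) (hb : 1 ≤ b) (c : Bool) :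
    runLengths (List.replicate a c ++ List.replicate b (!c)) = [a, b] := by
  obtain ⟨a', rfl⟩ : ∃ m, a = m + 1 := ⟨a - 1, by omega⟩
  obtain ⟨b', rfl⟩ : ∃ m, b = m + 1 := ⟨b - 1, by omega⟩
  rw [List.replicate_succ, List.cons_append]
  show runLengthsAux c 1 _ = _
  rw [aux_rep, List.replicate_succ, aux_ne (by simp)]
  have := aux_rep (!c) [] b' 1
  simp only [List.append_nil] at this
  rw [this]
  simp [runLengthsAux]
  omega

lemma rl_mut (a b : ℕ) (c : Bool) :
    runLengths (List.replicate a c ++ (!c) :: List.replicate b c) =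
      (if a = 0 then [] else [a]) ++ 1 :: (if b = 0 then [] else [b]) := by
  have hb : ∀ cnt, runLengthsAux (!c) cnt (List.replicate b c) =
      cnt :: (if b = 0 then [] else [b]) := by
    intro cnt
    cases b with
    | zero => simp [runLengthsAux]
    | succ b =>
      rw [List.replicate_succ, aux_ne (by simp)]
      have := aux_rep c [] b 1
      simp only [List.append_nil] at this
      rw [this]
      simp [runLengthsAux]
      omega
  cases a with
  | zero =>
    simp only [List.replicate_zero, List.nil_append]
    show runLengthsAux (!c) 1 _ = _
    rw [hb]
    simp
  | succ a =>
    rw [List.replicate_succ, List.cons_append]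
    show runLengthsAux c 1 _ = _
    rw [aux_rep, aux_ne (by simp), hb]
    simp
    omega

lemma entropy_cons (z w : Bool) (l : List Bool) :
    entropy (z :: w :: l) = (if z != w then 1 else 0) + entropy (w :: l) := by
  simp only [entropy, List.tail_cons, List.zip_cons_cons, List.countP_cons]
  by_cases h : z != w
  · simp [h]; omega
  · simp [h]

lemma entropy_replicate (n : ℕ) (c : Bool) : entropy (List.replicate n c) = 0 := by
  unfold entropy
  rw [List.countP_eq_zero]
  rintro ⟨x, y⟩ hmem
  obtain ⟨hx, hy⟩ := List.of_mem_zip hmem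
  have h1 := List.eq_of_mem_replicate hx
  have h2 := List.eq_of_mem_replicate (List.mem_of_mem_tail hy)
  subst h1; subst h2
  simp

lemma entropy_pos : ∀ (a : ℕ), 1 ≤ a → ∀ (x y : Bool), x ≠ y → ∀ (rest : List Bool),
    0 < entropy (List.replicate a x ++ y :: rest) := by
  intro a
  induction a with
  | zero => omega
  | succ a ih =>
    intro _ x y hxy rest
    cases a with
    | zero =>
      show 0 < entropy (x :: y :: rest)
      rw [entropy_cons]
      have h : (x != y) = true := by simp [hxy]
      rw [h]
      simp
    | succ a =>
      have h2 : List.replicate (a+1+1) x ++ y :: rest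
          = x :: (List.replicate (a+1) x ++ y :: rest) := by
        rw [List.replicate_succ, List.cons_append]
      have h3 : List.replicate (a+1) x ++ y :: rest
          = x :: (List.replicate a x ++ y :: rest) := by
        rw [List.replicate_succ, List.cons_append]
      rw [h2, h3, entropy_cons, ← h3]
      have := ih (by omega) x y hxy rest
      omega

lemma entropy_pos' (a b : ℕ) (ha : 1 ≤ a) (hb : 1 ≤ b) (x : Bool) :
    0 < entropy (List.replicate a x ++ List.replicate b (!x)) := by
  obtain ⟨b', rfl⟩ : ∃ m, b = m + 1 := ⟨b - 1, by omega⟩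
  rw [List.replicate_succ]
  exact entropy_pos a ha x (!x) (by simp) _

lemma crossover_replicate (k n : ℕ) (hk : k ≤ n) (c : Bool) :
    ga1Crossover k (List.replicate n c) =
      List.replicate k (!c) ++ List.replicate (n - k) c := by
  simp [ga1Crossover, List.take_replicate, List.drop_replicate, inf_eq_left.mpr hk]

lemma mutate_replicate (i n : ℕ) (hi : i < n) (c : Bool) :
    ga1Mutate i (List.replicate n c) =
      List.replicate i c ++ (!c) :: List.replicate (n - i - 1) c := by
  unfold ga1Mutate
  have hg : (List.replicate n c).getD i false = c := by
    simp [List.getD_eq_getElem?_getD, List.getElem?_replicate, hi]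
  rw [hg, List.set_eq_take_append_cons_drop]
  simp only [List.length_replicate, hi, if_pos, List.take_replicate, List.drop_replicate,
    inf_eq_left.mpr (le_of_lt hi)]
  rfl

lemma fil2 (a b : ℕ) (ha : a ≠ 1) (hb : b ≠ 1) :
    Multiset.filter (· ≠ 1) (↑([a, b]) : Multiset ℕ) = ({a, b} : Multiset ℕ) := by
  simp [List.filter, ha, hb]; rfl

lemma fil3 (a b : ℕ) (ha : a ≠ 1) (hb : b ≠ 1) :
    Multiset.filter (· ≠ 1) (↑([a, 1, b]) : Multiset ℕ) = ({a, b} : Multiset ℕ) := by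
  simp [List.filter, ha, hb]; rfl

lemma fil1b (b : ℕ) (hb : b ≠ 1) :
    Multiset.filter (· ≠ 1) (↑([1, b]) : Multiset ℕ) = ({b} : Multiset ℕ) := by
  simp [List.filter, hb]

lemma filb1 (b : ℕ) (hb : b ≠ 1) :
    Multiset.filter (· ≠ 1) (↑([b, 1]) : Multiset ℕ) = ({b} : Multiset ℕ) := by
  simp [List.filter, hb]

lemma fil11b (b : ℕ) (hb : b ≠ 1) :
    Multiset.filter (· ≠ 1) (↑([1, 1, b]) : Multiset ℕ) = ({b} : Multiset ℕ) := by
  simp [List.filter, hb]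

lemma filb11 (b : ℕ) (hb : b ≠ 1) :
    Multiset.filter (· ≠ 1) (↑([b, 1, 1]) : Multiset ℕ) = ({b} : Multiset ℕ) := by
  simp [List.filter, hb]

end GA1Helpers

/-- For `n ≥ 4`, the run-length heap representations (with runs of length 1
deleted) of the legal GA1 options of the constant bit string of length `n` are exactly the
multisets `{j, n-j}` for `2 ≤ j ≤ n-j`, the multisets `{k, n-1-k}` for `2 ≤ k ≤ n-1-k`, and
the singletons `{n-1}` and `{n-2}`. -/
theorem ga1_const_options (n : ℕ) (hn : 4 ≤ n) (c : Bool) :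
    {M | ∃ b', ga1Move (List.replicate n c) b' ∧ M = heapOf b'} =
      {M : Multiset ℕ |
        (∃ j, 2 ≤ j ∧ j ≤ n - j ∧ M = ({j, n - j} : Multiset ℕ)) ∨
        (∃ k, 2 ≤ k ∧ k ≤ n - 1 - k ∧ M = ({k, n - 1 - k} : Multiset ℕ)) ∨
        M = ({n - 1} : Multiset ℕ) ∨ M = ({n - 2} : Multiset ℕ)} := by
  ext M
  simp only [Set.mem_setOf_eq]
  constructor
  · rintro ⟨b', ⟨hmv, -⟩, rfl⟩
    rcases hmv with ⟨k, hk1, hk2, rfl⟩ | ⟨i, hi, rfl⟩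
    · rw [List.length_replicate] at hk2
      rw [crossover_replicate k n (by omega) c]
      have hrl : runLengths (List.replicate k (!c) ++ List.replicate (n - k) c)
          = [k, n - k] := by
        have := rl_two k (n - k) (by omega) (by omega) (!c)
        simpa using this
      unfold heapOf
      rw [hrl]
      rcases eq_or_ne k 1 with rfl | hk1'
      · right; right; left
        rw [fil1b (n - 1) (by omega)]
      · rcases eq_or_ne (n - k) 1 with hnk | hnk'
        · right; right; left
          have hk : k = n - 1 := by omega
          rw [hnk, hk, filb1 (n - 1) (by omega)]
        · left
          rw [fil2 k (n - k) hk1' hnk']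
          rcases le_total k (n - k) with h | h
          · exact ⟨k, by omega, h, rfl⟩
          · refine ⟨n - k, by omega, by omega, ?_⟩
            have h1 : n - (n - k) = k := by omega
            rw [h1, Multiset.pair_comm]
    · rw [List.length_replicate] at hi
      rw [mutate_replicate i n hi c]
      have hrl := rl_mut i (n - i - 1) c
      unfold heapOf
      rw [hrl]
      rcases eq_or_ne i 0 with rfl | hi0
      · right; right; left
        rw [if_pos rfl, if_neg (by omega : n - 0 - 1 ≠ 0)]
        simp only [List.nil_append]
        rw [(by omega : n - 0 - 1 = n - 1), fil1b (n - 1) (by omega)]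
      · rcases eq_or_ne i (n - 1) with rfl | hin
        · right; right; left
          rw [if_neg hi0, if_pos (by omega : n - (n - 1) - 1 = 0)]
          simp only [List.singleton_append]
          rw [filb1 (n - 1) (by omega)]
        · rw [if_neg hi0, if_neg (by omega : n - i - 1 ≠ 0)]
          simp only [List.singleton_append]
          rcases eq_or_ne i 1 with rfl | hi1
          · right; right; right
            rw [(by omega : n - 1 - 1 = n - 2), fil11b (n - 2) (by omega)]
          · rcases eq_or_ne i (n - 2) with rfl | hin2
            · right; right; right
              rw [(by omega : n - (n - 2) - 1 = 1), filb11 (n - 2) (by omega)]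
            · right; left
              rw [fil3 i (n - i - 1) hi1 (by omega)]
              rw [(by omega : n - i - 1 = n - 1 - i)]
              rcases le_total i (n - 1 - i) with h | h
              · exact ⟨i, by omega, h, rfl⟩
              · refine ⟨n - 1 - i, by omega, by omega, ?_⟩
                have h1 : n - 1 - (n - 1 - i) = i := by omega
                rw [h1, Multiset.pair_comm]
  · have hlen : (List.replicate n c).length = n := List.length_replicate (n := n) (a := c)
    rintro (⟨j, hj2, hjle, rfl⟩ | ⟨k, hk2, hkle, rfl⟩ | rfl | rfl)
    · refine ⟨ga1Crossover j (List.replicate n c),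
        ⟨Or.inl ⟨j, by omega, by rw [hlen]; omega, rfl⟩, ?_⟩, ?_⟩
      · rw [crossover_replicate j n (by omega) c, entropy_replicate]
        simpa using entropy_pos' j (n - j) (by omega) (by omega) (!c)
      · rw [crossover_replicate j n (by omega) c]
        unfold heapOf
        have hrl : runLengths (List.replicate j (!c) ++ List.replicate (n - j) c)
            = [j, n - j] := by
          have := rl_two j (n - j) (by omega) (by omega) (!c)
          simpa using this
        rw [hrl, fil2 j (n - j) (by omega) (by omega)]
    · refine ⟨ga1Mutate k (List.replicate n c),
        ⟨Or.inr ⟨k, by rw [hlen]; omega, rfl⟩, ?_⟩, ?_⟩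
      · rw [mutate_replicate k n (by omega) c, entropy_replicate]
        exact entropy_pos k (by omega) c (!c) (by simp) _
      · rw [mutate_replicate k n (by omega) c]
        unfold heapOf
        rw [rl_mut k (n - k - 1) c, if_neg (by omega : k ≠ 0),
          if_neg (by omega : n - k - 1 ≠ 0)]
        simp only [List.singleton_append]
        rw [fil3 k (n - k - 1) (by omega) (by omega), (by omega : n - k - 1 = n - 1 - k)]
    · refine ⟨ga1Crossover 1 (List.replicate n c),
        ⟨Or.inl ⟨1, le_refl 1, by rw [hlen]; omega, rfl⟩, ?_⟩, ?_⟩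
      · rw [crossover_replicate 1 n (by omega) c, entropy_replicate]
        simpa using entropy_pos' 1 (n - 1) (by omega) (by omega) (!c)
      · rw [crossover_replicate 1 n (by omega) c]
        unfold heapOf
        have hrl : runLengths (List.replicate 1 (!c) ++ List.replicate (n - 1) c)
            = [1, n - 1] := by
          have := rl_two 1 (n - 1) (by omega) (by omega) (!c)
          simpa using this
        rw [hrl, fil1b (n - 1) (by omega)]
    · refine ⟨ga1Mutate 1 (List.replicate n c),
        ⟨Or.inr ⟨1, by rw [hlen]; omega, rfl⟩, ?_⟩, ?_⟩
      · rw [mutate_replicate 1 n (by omega) c, entropy_replicate]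
        exact entropy_pos 1 (by omega) c (!c) (by simp) _
      · rw [mutate_replicate 1 n (by omega) c]
        unfold heapOf
        rw [rl_mut 1 (n - 1 - 1) c, if_neg (by omega : (1:ℕ) ≠ 0),
          if_neg (by omega : n - 1 - 1 ≠ 0)]
        simp only [List.singleton_append]
        rw [fil11b (n - 1 - 1) (by omega), (by omega : n - 1 - 1 = n - 2)]
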